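/- arXiv:1609.04201 — 3 statements merged into one kernel-verified Lean document; each statement's English description precedes it below -/
import Mathlib

section
/- Let S be a unital ring, σ injective, δ a left σ-derivation, and f ∈ R = S[t;σ,δ] monic of degree m ≥ 2. Then the Petit algebra S_f = R/Rf is associative if and only if Rf is a two-sided ideal of R (i.e., f is right-invariant: fR ⊆ Rf). -/
/-- An abstract presentation of the skew polynomial ring `S[t;σ,δ]`:
a ring `R` together with an embedding of `S`, a variable `t` satisfying the
commutation rule `t·a = σ(a)·t + δ(a)`, such that the `t^i` form a basis of `R`
as a left `S`-module (encoded by the coefficient equivalence). -/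
structure SkewPolyRing (S : Type*) (R : Type*) [Ring S] [Ring R]
    (σ : S →+* S) (δ : S →+ S) : Type _ where
  ι : S →+* R
  t : R
  t_comm : ∀ a : S, t * ι a = ι (σ a) * t + ι (δ a)
  coeff : R ≃+ (ℕ →₀ S)
  coeff_symm : ∀ p : ℕ →₀ S, coeff.symm p = p.sum fun i a => ι a * t ^ i

namespace SkewPolyRing

variable {S R : Type*} [Ring S] [Ring R] {σ : S →+* S} {δ : S →+ S}

/-- `g` has degree `< m`. -/
def degLT (P : SkewPolyRing S R σ δ) (g : R) (m : ℕ) : Prop :=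
  ∀ i, m ≤ i → P.coeff g i = 0

/-- The degree of a skew polynomial (with `deg 0 = 0` by convention). -/
noncomputable def deg (P : SkewPolyRing S R σ δ) (g : R) : ℕ :=
  (P.coeff g).support.sup id

/-- `f` is monic of degree `m`. -/
def MonicDeg (P : SkewPolyRing S R σ δ) (f : R) (m : ℕ) : Prop :=
  P.coeff f m = 1 ∧ ∀ i, m < i → P.coeff f i = 0

/-- `modr` computes a remainder of right division by `f`. -/
def IsModr (P : SkewPolyRing S R σ δ) (f : R) (m : ℕ) (modr : R → R) : Prop :=
  ∀ g : R, P.degLT (modr g) m ∧ ∃ q : R, g = q * f + modr g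

end SkewPolyRing

namespace SkewPolyRing

variable {S R : Type*} [Ring S] [Ring R] {σ : S →+* S} {δ : S →+ S}

variable (P : SkewPolyRing S R σ δ)

lemma coeff_ι_t_pow (a : S) (i : ℕ) :
    P.coeff (P.ι a * P.t ^ i) = Finsupp.single i a := by
  have h := P.coeff_symm (Finsupp.single i a)
  rw [Finsupp.sum_single_index (by simp)] at h
  rw [← h, AddEquiv.apply_symm_apply]

lemma coeff_t_pow (i : ℕ) :
    P.coeff (P.t ^ i) = Finsupp.single i (1 : S) := by
  simpa using P.coeff_ι_t_pow 1 i

lemma repr (g : R) : g = (P.coeff g).sum fun i a => P.ι a * P.t ^ i := by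
  conv_lhs => rw [← P.coeff.symm_apply_apply g, P.coeff_symm]

lemma degLT_sub {x y : R} {n : ℕ} (hx : P.degLT x n) (hy : P.degLT y n) :
    P.degLT (x - y) n := by
  intro i hi
  rw [map_sub, Finsupp.sub_apply, hx i hi, hy i hi, sub_zero]

lemma degLT_t_mul {g : R} {n : ℕ} (hg : P.degLT g n) : P.degLT (P.t * g) (n + 1) := by
  intro j hj
  conv_lhs => rw [P.repr g, Finsupp.mul_sum]
  rw [map_finsuppSum, Finsupp.sum_apply, Finsupp.sum]
  apply Finset.sum_eq_zero
  intro i hi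
  have hin : i < n := by
    by_contra h
    exact (Finsupp.mem_support_iff.mp hi) (hg i (le_of_not_gt h))
  have hterm : P.t * (P.ι (P.coeff g i) * P.t ^ i)
      = P.ι (σ (P.coeff g i)) * P.t ^ (i + 1) + P.ι (δ (P.coeff g i)) * P.t ^ i := by
    rw [← mul_assoc, P.t_comm, add_mul, mul_assoc, ← pow_succ']
  rw [hterm, map_add, P.coeff_ι_t_pow, P.coeff_ι_t_pow, Finsupp.add_apply,
    Finsupp.single_apply, Finsupp.single_apply, if_neg (by omega), if_neg (by omega),
    add_zero]

lemma degLT_ι_mul {g : R} {n : ℕ} (a : S) (hg : P.degLT g n) : P.degLT (P.ι a * g) n := by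
  intro j hj
  conv_lhs => rw [P.repr g, Finsupp.mul_sum]
  rw [map_finsuppSum, Finsupp.sum_apply, Finsupp.sum]
  apply Finset.sum_eq_zero
  intro i hi
  have hin : i < n := by
    by_contra h
    exact (Finsupp.mem_support_iff.mp hi) (hg i (le_of_not_gt h))
  rw [← mul_assoc, ← map_mul, P.coeff_ι_t_pow, Finsupp.single_apply,
    if_neg (by omega)]

lemma degLT_t_pow_mul {g : R} {n : ℕ} (j : ℕ) (hg : P.degLT g n) :
    P.degLT (P.t ^ j * g) (j + n) := by
  induction j with
  | zero => simpa using hg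
  | succ j ih =>
      have := P.degLT_t_mul ih
      rw [pow_succ', mul_assoc, show j + 1 + n = j + n + 1 by omega]
      exact this

lemma degLT_f_sub_t_pow {f : R} {m : ℕ} (hf : P.MonicDeg f m) :
    P.degLT (f - P.t ^ m) m := by
  intro i hi
  rw [map_sub, Finsupp.sub_apply, P.coeff_t_pow, Finsupp.single_apply]
  rcases eq_or_lt_of_le hi with h | h
  · rw [← h, if_pos rfl, hf.1, sub_self]
  · rw [if_neg (by omega), hf.2 i h, sub_zero]

lemma t_pow_mul_f {f : R} {m : ℕ} (hf : P.MonicDeg f m) (j : ℕ) :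
    P.t ^ j * f = P.t ^ (j + m) + P.t ^ j * (f - P.t ^ m) := by
  rw [mul_sub, ← pow_add]
  abel

/-- Uniqueness of remainders: a multiple of the monic `f` with degree `< m` is zero. -/
lemma eq_zero_of_degLT_mul_f {f : R} {m : ℕ} (hf : P.MonicDeg f m)
    {d q : R} (hd : P.degLT d m) (hq : d = q * f) : d = 0 := by
  by_contra hne
  have hq0 : P.coeff q ≠ 0 := by
    intro h
    have : q = 0 := by
      have := P.coeff.injective (a₁ := q) (a₂ := 0) (by simpa using h)
      exact this
    rw [this, zero_mul] at hq
    exact hne hq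
  have hsupp : (P.coeff q).support.Nonempty := by
    rw [Finsupp.support_nonempty_iff]; exact hq0
  set n := (P.coeff q).support.sup id with hn
  have hnmem : n ∈ (P.coeff q).support := by
    obtain ⟨b, hb, hbe⟩ := Finset.exists_mem_eq_sup _ hsupp id
    rw [hn, hbe]; exact hb
  have hle : ∀ i ∈ (P.coeff q).support, i ≤ n := fun i hi => Finset.le_sup (f := id) hi
  -- compute the coefficient of q * f at n + m
  have hqf : P.coeff (q * f) (n + m) = P.coeff q n := by
    conv_lhs => rw [P.repr q, Finsupp.sum_mul]
    rw [map_finsuppSum, Finsupp.sum_apply, Finsupp.sum]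
    rw [Finset.sum_congr rfl (g := fun i => if i = n then P.coeff q i else 0) ?_]
    · rw [Finset.sum_ite_eq' _ n, if_pos hnmem]
    · intro i hi
      have hin : i ≤ n := hle i hi
      rw [mul_assoc, P.t_pow_mul_f hf, mul_add, map_add P.coeff _ _, Finsupp.add_apply,
        P.coeff_ι_t_pow, Finsupp.single_apply,
        P.degLT_ι_mul _ (P.degLT_t_pow_mul i (P.degLT_f_sub_t_pow hf)) (n + m)
          (by omega), add_zero]
      by_cases h : i = n
      · rw [if_pos (by omega : i + m = n + m)]; simp [h]
      · rw [if_neg (by omega : ¬ i + m = n + m)]; simp [h]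
  rw [← hq] at hqf
  rw [hd (n + m) (by omega)] at hqf
  exact Finsupp.mem_support_iff.mp hnmem hqf.symm

lemma degLT_neg {x : R} {n : ℕ} (hx : P.degLT x n) : P.degLT (-x) n := by
  intro i hi
  rw [map_neg, Finsupp.neg_apply, hx i hi, neg_zero]

end SkewPolyRing

/-- The Petit algebra `S_f = R/Rf` (skew polynomials of degree `< m` with multiplication
`g ∘ h = gh mod_r f`) is associative if and only if `Rf` is a two-sided ideal of `R`,
i.e. `f` is right-invariant: `f·R ⊆ R·f`. -/
theorem petit_associative_iff_invariant {S R : Type*} [Ring S] [Ring R]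
    (σ : S →+* S) (δ : S →+ S) (hσ : Function.Injective σ)
    (hδ : ∀ a b : S, δ (a * b) = σ a * δ b + δ a * b)
    (P : SkewPolyRing S R σ δ) (f : R) (m : ℕ) (hm : 2 ≤ m)
    (hf : P.MonicDeg f m) (modr : R → R) (hmodr : P.IsModr f m modr) :
    (∀ g h k : R, P.degLT g m → P.degLT h m → P.degLT k m →
        modr (modr (g * h) * k) = modr (g * modr (h * k))) ↔
    (∀ r : R, ∃ q : R, f * r = q * f) := by
  classical
  have uniq : ∀ x y : R, P.degLT x m → P.degLT y m → (∃ q : R, x - y = q * f) → x = y := by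
    rintro x y hx hy ⟨q, hq⟩
    exact sub_eq_zero.mp (P.eq_zero_of_degLT_mul_f hf (P.degLT_sub hx hy) hq)
  have mcongr : ∀ x y : R, (∃ q : R, x = y + q * f) → modr x = modr y := by
    rintro x y ⟨q, hxy⟩
    obtain ⟨q1, hx⟩ := (hmodr x).2
    obtain ⟨q2, hy⟩ := (hmodr y).2
    refine uniq _ _ (hmodr x).1 (hmodr y).1 ⟨q + q2 - q1, ?_⟩
    have h1 : modr x = x - q1 * f := (sub_eq_of_eq_add' hx).symm
    have h2 : modr y = y - q2 * f := (sub_eq_of_eq_add' hy).symm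
    rw [h1, h2, hxy, sub_mul, add_mul]
    abel
  constructor
  · intro A
    have step1 : ∀ k : R, P.degLT k m → ∃ q : R, f * k = q * f := by
      intro k hk
      have h1 : P.degLT (P.t ^ (m - 1)) m := by
        intro i hi
        rw [P.coeff_t_pow, Finsupp.single_apply, if_neg (by omega)]
      have h2 : P.degLT P.t m := by
        intro i hi
        rw [show P.t = P.t ^ 1 from (pow_one _).symm, P.coeff_t_pow,
          Finsupp.single_apply, if_neg (by omega)]
      have hA := A _ _ _ h1 h2 hk
      have htm : P.t ^ (m - 1) * P.t = P.t ^ m := by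
        rw [← pow_succ, show m - 1 + 1 = m by omega]
      rw [htm] at hA
      obtain ⟨q0, hq0⟩ := (hmodr (P.t ^ m)).2
      have hmod_tm : modr (P.t ^ m) = P.t ^ m - f := by
        have hdl : P.degLT (P.t ^ m - f) m := by
          have := P.degLT_neg (P.degLT_f_sub_t_pow hf)
          rwa [neg_sub] at this
        refine uniq _ _ (hmodr _).1 hdl ⟨1 - q0, ?_⟩
        have hx : modr (P.t ^ m) = P.t ^ m - q0 * f := (sub_eq_of_eq_add' hq0).symm
        rw [hx, sub_mul, one_mul]
        abel
      rw [hmod_tm] at hA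
      obtain ⟨q2, hq2⟩ := (hmodr (P.t * k)).2
      have hr : P.t ^ (m - 1) * modr (P.t * k)
          = P.t ^ m * k + (-(P.t ^ (m - 1) * q2)) * f := by
        have hmtk : modr (P.t * k) = P.t * k - q2 * f := (sub_eq_of_eq_add' hq2).symm
        rw [hmtk, mul_sub, ← mul_assoc, ← mul_assoc, htm, neg_mul]
        abel
      rw [mcongr _ _ ⟨-(P.t ^ (m - 1) * q2), hr⟩] at hA
      obtain ⟨qa, ha⟩ := (hmodr ((P.t ^ m - f) * k)).2
      obtain ⟨qb, hb⟩ := (hmodr (P.t ^ m * k)).2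
      rw [hA] at ha
      refine ⟨qb - qa, ?_⟩
      have hfk : f * k = P.t ^ m * k - (P.t ^ m - f) * k := by
        rw [sub_mul]; abel
      rw [hfk, hb, ha, sub_mul]
      abel
    intro r
    obtain ⟨qr, hr⟩ := (hmodr r).2
    obtain ⟨qk, hk⟩ := step1 (modr r) (hmodr r).1
    refine ⟨f * qr + qk, ?_⟩
    rw [hr, mul_add, ← mul_assoc, hk, add_mul]
  · intro H g h k hg hh hk
    obtain ⟨q1, h1⟩ := (hmodr (g * h)).2
    obtain ⟨q2, h2⟩ := (hmodr (h * k)).2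
    obtain ⟨qk, hqk⟩ := H k
    have l1 : modr (g * h) * k = g * (h * k) + (-(q1 * qk)) * f := by
      have hgh : modr (g * h) = g * h - q1 * f := (sub_eq_of_eq_add' h1).symm
      rw [hgh, sub_mul, mul_assoc q1, hqk, ← mul_assoc q1, mul_assoc g, neg_mul]
      abel
    have l2 : g * modr (h * k) = g * (h * k) + (-(g * q2)) * f := by
      have hhk : modr (h * k) = h * k - q2 * f := (sub_eq_of_eq_add' h2).symm
      rw [hhk, mul_sub, ← mul_assoc g q2 f, neg_mul]
      abel
    rw [mcongr _ _ ⟨_, l1⟩, mcongr _ _ ⟨_, l2⟩]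
end

section
/- Let S be a division ring, σ injective, δ a left σ-derivation, and f ∈ S[t;σ,δ] monic of degree m ≥ 2 such that S_f is a finite-dimensional vector space over its center S_0. Then S_f is a division algebra if and only if f is irreducible in S[t;σ,δ]. -/
namespace SkewPolyRing

/-- The center `S₀` of the Petit algebra `S_f`: elements of degree `< m` that commute and
associate with all elements of `S_f` (where the product is `x ∘ y = modr (x·y)`). -/
def petitCenter {S R : Type*} [Ring S] [Ring R] {σ : S →+* S} {δ : S →+ S}
    (P : SkewPolyRing S R σ δ) (m : ℕ) (modr : R → R) : Set R :=
  {z | P.degLT z m ∧ (∀ x, P.degLT x m → modr (z * x) = modr (x * z)) ∧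
    ∀ x y, P.degLT x m → P.degLT y m →
      modr (modr (z * x) * y) = modr (z * modr (x * y)) ∧
      modr (modr (x * z) * y) = modr (x * modr (z * y)) ∧
      modr (modr (x * y) * z) = modr (x * modr (y * z))}

end SkewPolyRing

set_option linter.unusedSectionVars false

namespace SkewPolyRing

variable {S R : Type*} [Ring S] [Ring R] {σ : S →+* S} {δ : S →+ S}
variable (P : SkewPolyRing S R σ δ)

lemma csymm_single (i : ℕ) (a : S) :
    P.coeff.symm (Finsupp.single i a) = P.ι a * P.t ^ i := by
  rw [P.coeff_symm, Finsupp.sum_single_index]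
  simp

lemma coeff_iota_t (i : ℕ) (a : S) :
    P.coeff (P.ι a * P.t ^ i) = Finsupp.single i a := by
  rw [← csymm_single]; exact (P.coeff.apply_symm_apply _)

lemma coeff_one : P.coeff 1 = Finsupp.single 0 1 := by
  have := P.coeff_iota_t 0 1
  simpa using this

lemma sum_repr (g : R) :
    g = ∑ i ∈ (P.coeff g).support, P.ι (P.coeff g i) * P.t ^ i := by
  conv_lhs => rw [← P.coeff.symm_apply_apply g, P.coeff_symm]
  rfl

lemma coeff_apply_sum {α : Type*} (s : Finset α) (x : α → R) (j : ℕ) :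
    P.coeff (∑ i ∈ s, x i) j = ∑ i ∈ s, P.coeff (x i) j := by
  rw [map_sum]; exact Finset.sum_apply' j

lemma coeff_iota_mul (s : S) (g : R) (j : ℕ) :
    P.coeff (P.ι s * g) j = s * P.coeff g j := by
  conv_lhs => rw [P.sum_repr g]
  rw [Finset.mul_sum]
  have : ∀ i ∈ (P.coeff g).support,
      P.ι s * (P.ι (P.coeff g i) * P.t ^ i) = P.ι (s * P.coeff g i) * P.t ^ i := by
    intro i _; rw [← mul_assoc, ← map_mul]
  rw [Finset.sum_congr rfl this, coeff_apply_sum]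
  have : ∀ i ∈ (P.coeff g).support,
      P.coeff (P.ι (s * P.coeff g i) * P.t ^ i) j
        = if i = j then s * P.coeff g i else 0 := by
    intro i _; rw [coeff_iota_t, Finsupp.single_apply]
  rw [Finset.sum_congr rfl this, Finset.sum_ite_eq']
  by_cases h : j ∈ (P.coeff g).support
  · simp [h]
  · simp only [h, if_false]
    rw [Finsupp.notMem_support_iff.mp h, mul_zero]

lemma t_mul_decomp (g : R) :
    P.t * g = ∑ i ∈ (P.coeff g).support,
      (P.ι (σ (P.coeff g i)) * P.t ^ (i+1) + P.ι (δ (P.coeff g i)) * P.t ^ i) := by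
  conv_lhs => rw [P.sum_repr g]
  rw [Finset.mul_sum]
  refine Finset.sum_congr rfl fun i _ => ?_
  rw [← mul_assoc, P.t_comm, add_mul, mul_assoc, ← pow_succ']

lemma coeff_t_mul_zero (g : R) :
    P.coeff (P.t * g) 0 = δ (P.coeff g 0) := by
  rw [t_mul_decomp, coeff_apply_sum]
  have : ∀ i ∈ (P.coeff g).support,
      P.coeff (P.ι (σ (P.coeff g i)) * P.t ^ (i+1) + P.ι (δ (P.coeff g i)) * P.t ^ i) 0
        = if i = 0 then δ (P.coeff g i) else 0 := by
    intro i _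
    rw [map_add, Finsupp.add_apply, coeff_iota_t, coeff_iota_t,
      Finsupp.single_apply, Finsupp.single_apply]
    simp [Nat.succ_ne_zero]
  rw [Finset.sum_congr rfl this, Finset.sum_ite_eq']
  by_cases h : 0 ∈ (P.coeff g).support
  · simp [h]
  · simp only [h, if_false]
    rw [Finsupp.notMem_support_iff.mp h, map_zero]

lemma coeff_t_mul_succ (g : R) (j : ℕ) :
    P.coeff (P.t * g) (j+1) = σ (P.coeff g j) + δ (P.coeff g (j+1)) := by
  rw [t_mul_decomp, coeff_apply_sum]
  have : ∀ i ∈ (P.coeff g).support,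
      P.coeff (P.ι (σ (P.coeff g i)) * P.t ^ (i+1) + P.ι (δ (P.coeff g i)) * P.t ^ i) (j+1)
        = (if i = j then σ (P.coeff g i) else 0) + (if i = j+1 then δ (P.coeff g i) else 0) := by
    intro i _
    rw [map_add P.coeff, Finsupp.add_apply, coeff_iota_t, coeff_iota_t,
      Finsupp.single_apply, Finsupp.single_apply]
    congr 1
    simp [Nat.succ_inj]
  rw [Finset.sum_congr rfl this, Finset.sum_add_distrib, Finset.sum_ite_eq', Finset.sum_ite_eq']
  congr 1
  · by_cases h : j ∈ (P.coeff g).support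
    · simp [h]
    · simp only [h, if_false]
      rw [Finsupp.notMem_support_iff.mp h, map_zero]
  · by_cases h : j+1 ∈ (P.coeff g).support
    · simp [h]
    · simp only [h, if_false]
      rw [Finsupp.notMem_support_iff.mp h, map_zero]

end SkewPolyRing

namespace SkewPolyRing

variable {S R : Type*} [Ring S] [Ring R] {σ : S →+* S} {δ : S →+ S}
variable (P : SkewPolyRing S R σ δ)

lemma coeff_t_pow_mul (d : ℕ) (g : R) (hg : ∀ j, d < j → P.coeff g j = 0) :
    ∀ k : ℕ, (∀ n, k + d < n → P.coeff (P.t ^ k * g) n = 0) ∧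
      P.coeff (P.t ^ k * g) (k + d) = (σ ^ k) (P.coeff g d) := by
  intro k
  induction k with
  | zero => simpa using hg
  | succ k ih =>
    have ht : P.t ^ (k+1) * g = P.t * (P.t ^ k * g) := by
      rw [← mul_assoc, ← pow_succ']
    constructor
    · intro n hn
      match n, hn with
      | n+1, hn =>
        rw [ht, coeff_t_mul_succ]
        rw [ih.1 n (by omega), ih.1 (n+1) (by omega), map_zero, map_zero, add_zero]
    · rw [ht, show k + 1 + d = (k + d) + 1 by omega, coeff_t_mul_succ, ih.2,
        ih.1 (k + d + 1) (by omega), map_zero, add_zero, pow_succ']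
      rfl

lemma coeff_mul (dh : ℕ) (h : R) (hh : ∀ j, dh < j → P.coeff h j = 0) :
    ∀ (dg : ℕ) (g : R), (∀ i, dg < i → P.coeff g i = 0) →
      (∀ n, dg + dh < n → P.coeff (g * h) n = 0) ∧
      P.coeff (g * h) (dg + dh) = P.coeff g dg * (σ ^ dg) (P.coeff h dh) := by
  intro dg
  induction dg with
  | zero =>
    intro g hg
    have hgc : g = P.ι (P.coeff g 0) := by
      have : P.coeff g = Finsupp.single 0 (P.coeff g 0) := by
        ext j
        match j with
        | 0 => simp
        | j+1 => rw [hg (j+1) (by omega), Finsupp.single_apply]; simp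
      have := congrArg P.coeff.symm this
      rw [P.coeff.symm_apply_apply, csymm_single, pow_zero, mul_one] at this
      exact this
    constructor
    · intro n hn
      conv_lhs => rw [hgc]
      rw [coeff_iota_mul, hh n (by omega), mul_zero]
    · conv_lhs => rw [hgc]
      rw [coeff_iota_mul, pow_zero, zero_add]
      rfl
  | succ dg ih =>
    intro g hg
    set a := P.coeff g (dg + 1) with ha
    set g' := g - P.ι a * P.t ^ (dg + 1) with hg'
    have hgdec : g = P.ι a * P.t ^ (dg + 1) + g' := by rw [hg']; abel
    have hg'b : ∀ i, dg < i → P.coeff g' i = 0 := by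
      intro i hi
      rw [hg', map_sub P.coeff, Finsupp.sub_apply, coeff_iota_t, Finsupp.single_apply]
      rcases Nat.lt_or_ge i (dg + 2) with h1 | h1
      · have : i = dg + 1 := by omega
        simp [this, ha]
      · rw [hg i (by omega), if_neg (by omega), sub_zero]
    have kt := P.coeff_t_pow_mul dh h hh (dg + 1)
    have key : ∀ n, P.coeff (g * h) n
        = a * P.coeff (P.t ^ (dg+1) * h) n + P.coeff (g' * h) n := by
      intro n
      conv_lhs => rw [hgdec, add_mul, mul_assoc]
      rw [map_add P.coeff, Finsupp.add_apply, coeff_iota_mul]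
    constructor
    · intro n hn
      rw [key, kt.1 n (by omega), (ih g' hg'b).1 n (by omega), mul_zero, add_zero]
    · rw [key, kt.2, (ih g' hg'b).1 (dg + 1 + dh) (by omega), add_zero]

end SkewPolyRing

namespace SkewPolyRing

section RingS
variable {S R : Type*} [Ring S] [Ring R] {σ : S →+* S} {δ : S →+ S}
variable (P : SkewPolyRing S R σ δ)

lemma coeff_eq_zero_iff (g : R) : P.coeff g = 0 ↔ g = 0 := by
  constructor
  · intro h
    have := congrArg P.coeff.symm h
    rwa [P.coeff.symm_apply_apply, map_zero] at this
  · intro h; rw [h, map_zero]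

lemma eq_zero_of_coeff (g : R) (h : ∀ i, P.coeff g i = 0) : g = 0 :=
  (P.coeff_eq_zero_iff g).mp (Finsupp.ext h)

lemma coeff_deg_bound (g : R) : ∀ i, P.deg g < i → P.coeff g i = 0 := by
  intro i hi
  by_contra hne
  have hmem : i ∈ (P.coeff g).support := Finsupp.mem_support_iff.mpr hne
  have : i ≤ P.deg g := by
    have := Finset.le_sup (f := id) hmem
    simpa [deg] using this
  omega

lemma coeff_deg_ne_zero {g : R} (hg : g ≠ 0) : P.coeff g (P.deg g) ≠ 0 := by
  have hsupp : (P.coeff g).support.Nonempty := by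
    rw [Finsupp.support_nonempty_iff]
    intro h
    exact hg ((P.coeff_eq_zero_iff g).mp h)
  have hd : P.deg g = (P.coeff g).support.max' hsupp := by
    rw [deg, ← Finset.sup'_eq_sup hsupp id]; rfl
  have hmem : P.deg g ∈ (P.coeff g).support := by
    rw [hd]; exact Finset.max'_mem _ _
  exact Finsupp.mem_support_iff.mp hmem

end RingS

section DivRing
variable {S R : Type*} [DivisionRing S] [Ring R] {σ : S →+* S} {δ : S →+ S}
variable (P : SkewPolyRing S R σ δ)

/-- key positivity of top coefficient of products -/
lemma coeff_mul_top (hσ : Function.Injective σ) {g h : R} (hg : g ≠ 0) (h0 : h ≠ 0) :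
    P.coeff (g * h) (P.deg g + P.deg h) ≠ 0 := by
  have hc := (P.coeff_mul (P.deg h) h (P.coeff_deg_bound h) (P.deg g) g (P.coeff_deg_bound g)).2
  rw [hc]
  have h1 : (σ ^ P.deg g) (P.coeff h (P.deg h)) ≠ 0 := by
    intro hz
    apply P.coeff_deg_ne_zero h0
    have hinj : Function.Injective (σ ^ P.deg g : S →+* S) := by
      rw [RingHom.coe_pow]
      exact Function.Injective.iterate hσ _
    apply hinj
    rw [hz, map_zero]
  intro hz
  rcases mul_eq_zero.mp hz with h2 | h2
  · exact P.coeff_deg_ne_zero hg h2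
  · exact h1 h2

end DivRing
end SkewPolyRing

namespace SkewPolyRing
section Modr
variable {S R : Type*} [DivisionRing S] [Ring R] {σ : S →+* S} {δ : S →+ S}
variable (P : SkewPolyRing S R σ δ) (hσ : Function.Injective σ)
variable {f : R} {m : ℕ} {modr : R → R}

lemma degLT_zero : P.degLT 0 m := fun i _ => by rw [map_zero]; rfl

lemma degLT_add {g h : R} (hg : P.degLT g m) (hh : P.degLT h m) : P.degLT (g + h) m := by
  intro i hi
  rw [map_add P.coeff, Finsupp.add_apply, hg i hi, hh i hi, add_zero]

lemma degLT_sub_s5 {g h : R} (hg : P.degLT g m) (hh : P.degLT h m) : P.degLT (g - h) m := by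
  intro i hi
  rw [map_sub P.coeff, Finsupp.sub_apply, hg i hi, hh i hi, sub_zero]

lemma degLT_iota_mul (s : S) {g : R} (hg : P.degLT g m) : P.degLT (P.ι s * g) m := by
  intro i hi
  rw [coeff_iota_mul, hg i hi, mul_zero]

lemma degLT_one (hm : 1 ≤ m) : P.degLT (1 : R) m := by
  intro i hi
  rw [coeff_one, Finsupp.single_apply, if_neg (by omega)]

include hσ
lemma eq_zero_of_mulf_degLT (hf : P.MonicDeg f m) {q : R} (h : P.degLT (q * f) m) :
    q = 0 := by
  by_contra hq
  have hfne : f ≠ 0 := by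
    intro h0
    have h1 := hf.1
    rw [h0, map_zero] at h1
    simp at h1
  have hdf : P.deg f = m := by
    have h1 : P.deg f ≤ m := by
      by_contra hlt
      exact P.coeff_deg_ne_zero hfne (hf.2 _ (by omega))
    have h2 : m ≤ P.deg f := by
      by_contra hlt
      exact one_ne_zero ((P.coeff_deg_bound f m (by omega)).symm.trans hf.1).symm
    omega
  have := P.coeff_mul_top hσ hq hfne
  rw [hdf] at this
  exact this (h _ (by omega))

lemma modr_unique (hf : P.MonicDeg f m) (hmodr : P.IsModr f m modr) {g q r : R}
    (hdec : g = q * f + r) (hr : P.degLT r m) : modr g = r := by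
  obtain ⟨q₀, hq₀⟩ := (hmodr g).2
  have hsub : (q - q₀) * f = modr g - r := by
    rw [sub_mul]
    have h1 : q * f = g - r := eq_sub_of_add_eq hdec.symm
    have h2 : q₀ * f = g - modr g := eq_sub_of_add_eq hq₀.symm
    rw [h1, h2]; abel
  have : q - q₀ = 0 := P.eq_zero_of_mulf_degLT hσ hf
    (by rw [hsub]; exact P.degLT_sub_s5 (hmodr g).1 hr)
  rw [this, zero_mul] at hsub
  have := hsub.symm
  rw [sub_eq_zero] at this
  exact this

lemma modr_self (hf : P.MonicDeg f m) (hmodr : P.IsModr f m modr) {g : R}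
    (hg : P.degLT g m) : modr g = g :=
  P.modr_unique hσ hf hmodr (by rw [zero_mul, zero_add]) hg

lemma modr_zero (hf : P.MonicDeg f m) (hmodr : P.IsModr f m modr) : modr 0 = 0 :=
  P.modr_self hσ hf hmodr (P.degLT_zero)

lemma modr_add (hf : P.MonicDeg f m) (hmodr : P.IsModr f m modr) (g h : R) :
    modr (g + h) = modr g + modr h := by
  obtain ⟨q1, hq1⟩ := (hmodr g).2
  obtain ⟨q2, hq2⟩ := (hmodr h).2
  refine P.modr_unique hσ hf hmodr (q := q1 + q2) ?_
    (P.degLT_add (hmodr g).1 (hmodr h).1)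
  rw [add_mul]
  conv_lhs => rw [hq1, hq2]
  abel

lemma modr_sub (hf : P.MonicDeg f m) (hmodr : P.IsModr f m modr) (g h : R) :
    modr (g - h) = modr g - modr h := by
  obtain ⟨q1, hq1⟩ := (hmodr g).2
  obtain ⟨q2, hq2⟩ := (hmodr h).2
  refine P.modr_unique hσ hf hmodr (q := q1 - q2) ?_
    (P.degLT_sub_s5 (hmodr g).1 (hmodr h).1)
  rw [sub_mul]
  conv_lhs => rw [hq1, hq2]
  abel

lemma modr_iota_mul (hf : P.MonicDeg f m) (hmodr : P.IsModr f m modr) (s : S) (g : R) :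
    modr (P.ι s * g) = P.ι s * modr g := by
  obtain ⟨q1, hq1⟩ := (hmodr g).2
  refine P.modr_unique hσ hf hmodr (q := P.ι s * q1) ?_
    (P.degLT_iota_mul s (hmodr g).1)
  conv_lhs => rw [hq1]
  rw [mul_add, mul_assoc]

lemma modr_add_mulf (hf : P.MonicDeg f m) (hmodr : P.IsModr f m modr) (g w : R) :
    modr (g + w * f) = modr g := by
  obtain ⟨q1, hq1⟩ := (hmodr g).2
  refine P.modr_unique hσ hf hmodr (q := q1 + w) ?_ (hmodr g).1
  rw [add_mul]
  conv_lhs => rw [hq1]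
  abel

lemma modr_mulf (hf : P.MonicDeg f m) (hmodr : P.IsModr f m modr) (w : R) :
    modr (w * f) = 0 :=
  P.modr_unique hσ hf hmodr (q := w) (by rw [add_zero]) (P.degLT_zero)

end Modr
end SkewPolyRing

namespace SkewPolyRing
section RDiv
variable {S R : Type*} [DivisionRing S] [Ring R] {σ : S →+* S} {δ : S →+ S}
variable (P : SkewPolyRing S R σ δ) (hσ : Function.Injective σ)

lemma exists_bound (x : R) : ∃ N, ∀ i, N ≤ i → P.coeff x i = 0 :=
  ⟨P.deg x + 1, fun i hi => P.coeff_deg_bound x i (by omega)⟩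

include hσ
lemma rdiv {g : R} {d : ℕ} (hgd : P.coeff g d ≠ 0) (hgb : ∀ i, d < i → P.coeff g i = 0) :
    ∀ (N : ℕ) (x : R), (∀ i, N ≤ i → P.coeff x i = 0) →
      ∃ q r, x = q * g + r ∧ ∀ i, d ≤ i → P.coeff r i = 0 := by
  intro N
  induction N with
  | zero =>
    intro x hx
    refine ⟨0, 0, by rw [zero_mul, add_zero, P.eq_zero_of_coeff x fun i => hx i (by omega)],
      fun i _ => by rw [map_zero]; rfl⟩
  | succ N ih =>
    intro x hx
    rcases Nat.lt_or_ge N d with hNd | hNd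
    · exact ⟨0, x, by rw [zero_mul, zero_add], fun i hi => hx i (by omega)⟩
    · set k := N - d with hk
      have hkd : k + d = N := by omega
      set e := P.coeff x N * ((σ ^ k) (P.coeff g d))⁻¹ with he
      set x' := x - P.ι e * P.t ^ k * g with hx'
      have hcoef : ∀ n, P.coeff (P.ι e * P.t ^ k * g) n = e * P.coeff (P.t ^ k * g) n := by
        intro n; rw [mul_assoc, coeff_iota_mul]
      have htp := P.coeff_t_pow_mul d g hgb k
      have hσd : (σ ^ k) (P.coeff g d) ≠ 0 := by
        intro hz
        apply hgd
        have hinj : Function.Injective (σ ^ k : S →+* S) := by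
          rw [RingHom.coe_pow]; exact Function.Injective.iterate hσ _
        apply hinj; rw [hz, map_zero]
      have hx'b : ∀ i, N ≤ i → P.coeff x' i = 0 := by
        intro i hi
        rw [hx', map_sub P.coeff, Finsupp.sub_apply, hcoef]
        rcases Nat.lt_or_ge N i with h1 | h1
        · rw [hx i (by omega), htp.1 i (by omega), mul_zero, sub_zero]
        · have : i = N := by omega
          subst this
          rw [← hkd, htp.2, he, mul_assoc, inv_mul_cancel₀ hσd, mul_one, hkd, sub_self]
      obtain ⟨q, r, hqr, hr⟩ := ih x' hx'b
      refine ⟨q + P.ι e * P.t ^ k, r, ?_, hr⟩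
      rw [add_mul]
      have : x = x' + P.ι e * P.t ^ k * g := by rw [hx']; abel
      rw [this, hqr]; abel

end RDiv
end SkewPolyRing

namespace SkewPolyRing
section Bezout
variable {S R : Type*} [DivisionRing S] [Ring R] {σ : S →+* S} {δ : S →+ S}
variable (P : SkewPolyRing S R σ δ) (hσ : Function.Injective σ)
variable {f : R} {m : ℕ} {modr : R → R}

include hσ

/-- From a nonzero element of minimal degree in a "left-ideal-like" predicate,
    everything reduces.  Generic min-degree generator extraction. -/
lemma min_deg_gen (I : R → Prop) (hI0 : ∃ x, I x ∧ x ≠ 0)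
    : ∃ g d, I g ∧ g ≠ 0 ∧ P.coeff g d ≠ 0 ∧ (∀ i, d < i → P.coeff g i = 0) ∧
      (∀ x, I x → (∀ i, d ≤ i → P.coeff x i = 0) → x = 0) ∧
      (∀ N x, I x → x ≠ 0 → (∀ i, N < i → P.coeff x i = 0) → d ≤ N) := by
  classical
  have hQ : ∃ N, ∃ x, I x ∧ x ≠ 0 ∧ ∀ i, N < i → P.coeff x i = 0 := by
    obtain ⟨x, hx, hx0⟩ := hI0
    obtain ⟨N, hN⟩ := P.exists_bound x
    exact ⟨N, x, hx, hx0, fun i hi => hN i (by omega)⟩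
  set d := Nat.find hQ with hd
  obtain ⟨g, hgI, hg0, hgb⟩ := Nat.find_spec hQ
  have hmin : ∀ N, N < d → ¬ ∃ x, I x ∧ x ≠ 0 ∧ ∀ i, N < i → P.coeff x i = 0 :=
    fun N hN => Nat.find_min hQ hN
  have hgd : P.coeff g d ≠ 0 := by
    intro hz
    rcases Nat.eq_zero_or_pos d with h0 | hpos
    · apply hg0
      apply P.eq_zero_of_coeff
      intro i
      rcases Nat.eq_zero_or_pos i with hi0 | hip
      · rw [hi0, ← h0]; exact hz
      · exact hgb i (by omega)
    · refine hmin (d-1) (by omega) ⟨g, hgI, hg0, fun i hi => ?_⟩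
      rcases Nat.lt_or_ge d i with h1 | h1
      · exact hgb i h1
      · have : i = d := by omega
        rw [this]; exact hz
  refine ⟨g, d, hgI, hg0, hgd, hgb, ?_, ?_⟩
  · intro x hxI hxb
    by_contra hx0
    rcases Nat.eq_zero_or_pos d with h0 | hpos
    · exact hx0 (P.eq_zero_of_coeff x fun i => hxb i (by omega))
    · exact hmin (d-1) (by omega) ⟨x, hxI, hx0, fun i hi => hxb i (by omega)⟩
  · intro N x hxI hx0 hxb
    exact Nat.find_le ⟨x, hxI, hx0, hxb⟩

end Bezout
end SkewPolyRing

namespace SkewPolyRing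
section Bezout2
variable {S R : Type*} [DivisionRing S] [Ring R] {σ : S →+* S} {δ : S →+ S}
variable (P : SkewPolyRing S R σ δ) (hσ : Function.Injective σ)
variable {f : R} {m : ℕ}

include hσ

lemma f_ne_zero (hf : P.MonicDeg f m) : f ≠ 0 := by
  intro h0
  have h1 := hf.1
  rw [h0, map_zero] at h1
  simp at h1

/-- if `x ∈ I`, `I` closed under subtraction and left multiplication, with a minimal-degree
element `g` of exact degree `d`, then every bounded... every element of I is `q * g`. -/
lemma reduce_by_gen (I : R → Prop)
    (hsub : ∀ x y, I x → I y → I (x - y)) (hmul : ∀ q x, I x → I (q * x))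
    {g : R} {d : ℕ} (hgI : I g) (hgd : P.coeff g d ≠ 0)
    (hgb : ∀ i, d < i → P.coeff g i = 0)
    (hz : ∀ x, I x → (∀ i, d ≤ i → P.coeff x i = 0) → x = 0) :
    ∀ x, I x → ∃ q, x = q * g := by
  intro x hxI
  obtain ⟨N, hN⟩ := P.exists_bound x
  obtain ⟨q, r, hqr, hr⟩ := P.rdiv hσ hgd hgb N x hN
  have hrI : I r := by
    have : r = x - q * g := by rw [hqr]; abel
    rw [this]
    exact hsub _ _ hxI (hmul q g hgI)
  have : r = 0 := hz r hrI hr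
  exact ⟨q, by rw [hqr, this, add_zero]⟩

/-- Bezout: if f is (right-)irreducible and b ≠ 0 of degree < m then 1 = u b + w f. -/
lemma exists_one_eq (hm : 2 ≤ m) (hf : P.MonicDeg f m)
    (h2 : ¬ ∃ g h : R, P.degLT g m ∧ P.degLT h m ∧ f = g * h)
    {b : R} (hb0 : b ≠ 0) (hbd : P.degLT b m) :
    ∃ u w : R, (1 : R) = u * b + w * f := by
  classical
  set I : R → Prop := fun x => ∃ u w, x = u * b + w * f with hI
  have hIsub : ∀ x y, I x → I y → I (x - y) := by
    rintro x y ⟨u1, w1, h1⟩ ⟨u2, w2, h2⟩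
    exact ⟨u1 - u2, w1 - w2, by rw [h1, h2, sub_mul, sub_mul]; abel⟩
  have hImul : ∀ q x, I x → I (q * x) := by
    rintro q x ⟨u1, w1, h1⟩
    exact ⟨q * u1, q * w1, by rw [h1, mul_add, mul_assoc, mul_assoc]⟩
  obtain ⟨g, d, hgI, hg0, hgd, hgb, hzero, hmin⟩ :=
    P.min_deg_gen hσ I ⟨b, ⟨1, 0, by rw [one_mul, zero_mul, add_zero]⟩, hb0⟩
  have hdm : d ≤ m - 1 :=
    hmin (m-1) b ⟨1, 0, by rw [one_mul, zero_mul, add_zero]⟩ hb0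
      (fun i hi => hbd i (by omega))
  have hred := P.reduce_by_gen hσ I hIsub hImul hgI hgd hgb hzero
  rcases Nat.eq_zero_or_pos d with hd0 | hdpos
  · -- g is a unit, 1 ∈ I
    obtain ⟨u1, w1, hg⟩ := hgI
    subst hd0
    refine ⟨P.ι (P.coeff g 0)⁻¹ * u1, P.ι (P.coeff g 0)⁻¹ * w1, ?_⟩
    have hgc : g = P.ι (P.coeff g 0) := by
      have : P.coeff g = Finsupp.single 0 (P.coeff g 0) := by
        ext j
        rcases Nat.eq_zero_or_pos j with hj0 | hjp
        · subst hj0; simp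
        · rw [hgb j (by omega), Finsupp.single_apply, if_neg (by omega)]
      have h4 := congrArg P.coeff.symm this
      rw [P.coeff.symm_apply_apply, csymm_single, pow_zero, mul_one] at h4
      exact h4
    have h1 : P.ι (P.coeff g 0)⁻¹ * g = 1 := by
      calc P.ι (P.coeff g 0)⁻¹ * g = P.ι (P.coeff g 0)⁻¹ * P.ι (P.coeff g 0) := by
            rw [← hgc]
        _ = 1 := by rw [← map_mul, inv_mul_cancel₀ hgd, map_one]
    rw [← h1, hg]
    noncomm_ring
  · -- d ≥ 1 : contradiction with irreducibility
    exfalso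
    obtain ⟨q, hq⟩ := hred f ⟨0, 1, by rw [zero_mul, one_mul, zero_add]⟩
    have hq0 : q ≠ 0 := by
      intro h0
      rw [h0, zero_mul] at hq
      exact P.f_ne_zero hσ hf hq
    apply h2
    refine ⟨q, g, ?_, ?_, hq⟩
    · -- degLT q m
      have htop : P.coeff (q * g) (P.deg q + P.deg g) ≠ 0 := P.coeff_mul_top hσ hq0 hg0
      rw [← hq] at htop
      have hdg : P.deg g = d := by
        have h1 : P.deg g ≤ d := by
          by_contra hlt
          exact P.coeff_deg_ne_zero hg0 (hgb _ (by omega))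
        have h2 : d ≤ P.deg g := by
          by_contra hlt
          exact hgd (P.coeff_deg_bound g d (by omega))
        omega
      have hqm : P.deg q + d ≤ m := by
        by_contra hgt
        rw [hdg] at htop
        exact htop (hf.2 _ (by omega))
      intro i hi
      exact P.coeff_deg_bound q i (by omega)
    · intro i hi
      exact hgb i (by omega)

end Bezout2
end SkewPolyRing

namespace SkewPolyRing
section ElemF
variable {S R : Type*} [Ring S] [Ring R] {σ : S →+* S} {δ : S →+ S}
variable (P : SkewPolyRing S R σ δ)

def elemF {n : ℕ} (v : Fin n → S) : R := ∑ i : Fin n, P.ι (v i) * P.t ^ (i : ℕ)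

lemma coeff_elemF {n : ℕ} (v : Fin n → S) (j : ℕ) :
    P.coeff (P.elemF v) j = if h : j < n then v ⟨j, h⟩ else 0 := by
  rw [elemF, coeff_apply_sum]
  have hterm : ∀ i : Fin n, P.coeff (P.ι (v i) * P.t ^ (i : ℕ)) j
      = if (i : ℕ) = j then v i else 0 := fun i => by
    rw [coeff_iota_t, Finsupp.single_apply]
  rw [Finset.sum_congr rfl fun i _ => hterm i]
  by_cases h : j < n
  · rw [dif_pos h]
    rw [Finset.sum_eq_single (⟨j, h⟩ : Fin n)]
    · rw [if_pos rfl]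
    · intro i _ hne
      rw [if_neg]
      intro hij
      exact hne (Fin.ext hij)
    · intro habs
      exact absurd (Finset.mem_univ _) habs
  · rw [dif_neg h]
    apply Finset.sum_eq_zero
    intro i _
    rw [if_neg]
    intro hij
    omega
lemma elemF_add {n : ℕ} (v w : Fin n → S) : P.elemF (v + w) = P.elemF v + P.elemF w := by
  rw [elemF, elemF, elemF, ← Finset.sum_add_distrib]
  refine Finset.sum_congr rfl fun i _ => ?_
  rw [Pi.add_apply, map_add, add_mul]

lemma elemF_smul {n : ℕ} (s : S) (v : Fin n → S) : P.elemF (s • v) = P.ι s * P.elemF v := by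
  rw [elemF, elemF, Finset.mul_sum]
  refine Finset.sum_congr rfl fun i _ => ?_
  rw [Pi.smul_apply, smul_eq_mul, map_mul, mul_assoc]

lemma elemF_degLT {n : ℕ} (v : Fin n → S) : P.degLT (P.elemF v) n := by
  intro i hi
  rw [coeff_elemF, dif_neg (by omega)]

lemma elemF_eq_of_coeff {n : ℕ} (v : Fin n → S) (r : R)
    (hb : ∀ i, n ≤ i → P.coeff r i = 0) (hv : ∀ i : Fin n, v i = P.coeff r (i : ℕ)) :
    P.elemF v = r := by
  have : P.coeff (P.elemF v) = P.coeff r := by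
    ext j
    rw [coeff_elemF]
    by_cases h : j < n
    · rw [dif_pos h, hv ⟨j, h⟩]
    · rw [dif_neg h, hb j (by omega)]
  exact P.coeff.injective this

end ElemF

section NZD
variable {S R : Type*} [DivisionRing S] [Ring R] {σ : S →+* S} {δ : S →+ S}
variable (P : SkewPolyRing S R σ δ) (hσ : Function.Injective σ)
variable {f : R} {m : ℕ} {modr : R → R}

include hσ

lemma nzd (hm : 2 ≤ m) (hf : P.MonicDeg f m) (hmodr : P.IsModr f m modr)
    (h2 : ¬ ∃ g h : R, P.degLT g m ∧ P.degLT h m ∧ f = g * h)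
    {a b : R} (ha : P.degLT a m) (hb : P.degLT b m) (ha0 : a ≠ 0) (hb0 : b ≠ 0) :
    modr (a * b) ≠ 0 := by
  classical
  intro hab
  set K : R → Prop := fun x => ∃ w, x * b = w * f with hK
  have hKsub : ∀ x y, K x → K y → K (x - y) := by
    rintro x y ⟨w1, h1⟩ ⟨w2, h2⟩
    exact ⟨w1 - w2, by rw [sub_mul, h1, h2, sub_mul]⟩
  have hKmul : ∀ q x, K x → K (q * x) := by
    rintro q x ⟨w1, h1⟩
    exact ⟨q * w1, by rw [mul_assoc, h1, mul_assoc]⟩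
  have hKa : K a := by
    obtain ⟨q, hq⟩ := (hmodr (a * b)).2
    exact ⟨q, by rw [hq, hab, add_zero]⟩
  obtain ⟨g, d, hgK, hg0, hgd, hgb, hzero, hmin⟩ := P.min_deg_gen hσ K ⟨a, hKa, ha0⟩
  have hdm : d ≤ m - 1 := hmin (m-1) a hKa ha0 (fun i hi => ha i (by omega))
  obtain ⟨u, w, hbez⟩ := P.exists_one_eq hσ hm hf h2 hb0 hb
  obtain ⟨wg, hwg⟩ := hgK
  -- the S-linear map
  let α : (Fin d → S) →ₗ[S] (Fin m → S) :=
    { toFun := fun v => fun j => P.coeff (modr (P.elemF v * b)) (j : ℕ)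
      map_add' := fun v w => by
        funext j
        show P.coeff (modr (P.elemF (v + w) * b)) (j : ℕ)
          = P.coeff (modr (P.elemF v * b)) (j : ℕ) + P.coeff (modr (P.elemF w * b)) (j : ℕ)
        rw [P.elemF_add, add_mul, P.modr_add hσ hf hmodr, map_add P.coeff, Finsupp.add_apply]
      map_smul' := fun s v => by
        funext j
        show P.coeff (modr (P.elemF (s • v) * b)) (j : ℕ)
          = s * P.coeff (modr (P.elemF v * b)) (j : ℕ)
        rw [P.elemF_smul, mul_assoc, P.modr_iota_mul hσ hf hmodr, coeff_iota_mul] }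
  have hαinj : Function.Injective α := by
    rw [← LinearMap.ker_eq_bot, LinearMap.ker_eq_bot']
    intro v hv
    have hv0 : modr (P.elemF v * b) = 0 := by
      apply P.eq_zero_of_coeff
      intro i
      by_cases h : i < m
      · exact congrFun hv ⟨i, h⟩
      · exact (hmodr _).1 i (by omega)
    have hKe : K (P.elemF v) := by
      obtain ⟨q, hq⟩ := (hmodr (P.elemF v * b)).2
      exact ⟨q, by rw [hq, hv0, add_zero]⟩
    have he0 : P.elemF v = 0 := hzero _ hKe (fun i hi => by
      rw [P.coeff_elemF, dif_neg (by omega)])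
    funext i
    have := congrArg (fun x => P.coeff x (i : ℕ)) he0
    simp only [map_zero] at this
    rw [P.coeff_elemF, dif_pos i.isLt] at this
    simpa using this
  have hαsurj : Function.Surjective α := by
    intro wv
    set y := P.elemF wv with hy
    have hyd : P.degLT y m := P.elemF_degLT wv
    have hyu : (y * u) * b = y + (-(y * w)) * f := by
      have h5 : y = (y * u) * b + (y * w) * f := by
        calc y = y * 1 := by rw [mul_one]
          _ = (y * u) * b + (y * w) * f := by rw [hbez, mul_add, ← mul_assoc, ← mul_assoc]
      have h4 : y * u * b = y - (y * w) * f := eq_sub_of_add_eq h5.symm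
      rw [neg_mul, h4]
      abel
    have hmyu : modr ((y * u) * b) = y := by
      rw [hyu, P.modr_add_mulf hσ hf hmodr, P.modr_self hσ hf hmodr hyd]
    obtain ⟨N, hN⟩ := P.exists_bound (y * u)
    obtain ⟨q, r, hqr, hr⟩ := P.rdiv hσ hgd hgb N (y * u) hN
    have hrb : r * b = (y * u) * b + (-(q * wg)) * f := by
      have h3 : r = y * u - q * g := by rw [hqr]; abel
      rw [h3, sub_mul, mul_assoc q g b, hwg, ← mul_assoc, neg_mul]
      abel
    have hmr : modr (r * b) = y := by rw [hrb, P.modr_add_mulf hσ hf hmodr, hmyu]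
    refine ⟨fun i => P.coeff r (i : ℕ), ?_⟩
    have her : P.elemF (fun i : Fin d => P.coeff r (i : ℕ)) = r :=
      P.elemF_eq_of_coeff _ r hr (fun i => rfl)
    funext j
    show P.coeff (modr (P.elemF _ * b)) (j : ℕ) = wv j
    rw [her, hmr, hy, P.coeff_elemF, dif_pos j.isLt]
  have hdm2 : d = m := by
    have h := (LinearEquiv.ofBijective α ⟨hαinj, hαsurj⟩).finrank_eq
    rwa [Module.finrank_fin_fun, Module.finrank_fin_fun] at h
  omega

end NZD
end SkewPolyRing

namespace SkewPolyRing
section Center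
variable {S R : Type*} [DivisionRing S] [Ring R] {σ : S →+* S} {δ : S →+ S}
variable (P : SkewPolyRing S R σ δ) (hσ : Function.Injective σ)
variable {f : R} {m : ℕ} {modr : R → R}

include hσ

lemma rmul_inj (hm : 2 ≤ m) (hf : P.MonicDeg f m) (hmodr : P.IsModr f m modr)
    (h2 : ¬ ∃ g h : R, P.degLT g m ∧ P.degLT h m ∧ f = g * h)
    {c : R} (hcd : P.degLT c m) (hc0 : c ≠ 0) {u v : R}
    (hu : P.degLT u m) (hv : P.degLT v m)
    (h : modr (u * c) = modr (v * c)) : u = v := by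
  by_contra hne
  refine P.nzd hσ hm hf hmodr h2 (P.degLT_sub_s5 hu hv) hcd (sub_ne_zero.mpr hne) hc0 ?_
  rw [sub_mul, P.modr_sub hσ hf hmodr, h, sub_self]

lemma lmul_inj (hm : 2 ≤ m) (hf : P.MonicDeg f m) (hmodr : P.IsModr f m modr)
    (h2 : ¬ ∃ g h : R, P.degLT g m ∧ P.degLT h m ∧ f = g * h)
    {c : R} (hcd : P.degLT c m) (hc0 : c ≠ 0) {u v : R}
    (hu : P.degLT u m) (hv : P.degLT v m)
    (h : modr (c * u) = modr (c * v)) : u = v := by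
  by_contra hne
  refine P.nzd hσ hm hf hmodr h2 hcd (P.degLT_sub_s5 hu hv) hc0 (sub_ne_zero.mpr hne) ?_
  rw [mul_sub, P.modr_sub hσ hf hmodr, h, sub_self]

lemma rmul_surj (hm : 2 ≤ m) (hf : P.MonicDeg f m) (hmodr : P.IsModr f m modr)
    (h2 : ¬ ∃ g h : R, P.degLT g m ∧ P.degLT h m ∧ f = g * h)
    {a : R} (ha : P.degLT a m) (ha0 : a ≠ 0) {y : R} (hy : P.degLT y m) :
    ∃ x, P.degLT x m ∧ modr (x * a) = y := by
  classical
  let β : (Fin m → S) →ₗ[S] (Fin m → S) :=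
    { toFun := fun v => fun j => P.coeff (modr (P.elemF v * a)) (j : ℕ)
      map_add' := fun v w => by
        funext j
        show P.coeff (modr (P.elemF (v + w) * a)) (j : ℕ)
          = P.coeff (modr (P.elemF v * a)) (j : ℕ) + P.coeff (modr (P.elemF w * a)) (j : ℕ)
        rw [P.elemF_add, add_mul, P.modr_add hσ hf hmodr, map_add P.coeff, Finsupp.add_apply]
      map_smul' := fun s v => by
        funext j
        show P.coeff (modr (P.elemF (s • v) * a)) (j : ℕ)
          = s * P.coeff (modr (P.elemF v * a)) (j : ℕ)
        rw [P.elemF_smul, mul_assoc, P.modr_iota_mul hσ hf hmodr, coeff_iota_mul] }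
  have hβinj : Function.Injective β := by
    rw [← LinearMap.ker_eq_bot, LinearMap.ker_eq_bot']
    intro v hv
    have hv0 : modr (P.elemF v * a) = 0 := by
      apply P.eq_zero_of_coeff
      intro i
      by_cases h : i < m
      · exact congrFun hv ⟨i, h⟩
      · exact (hmodr _).1 i (by omega)
    have he0 : P.elemF v = 0 := by
      by_contra hne
      exact P.nzd hσ hm hf hmodr h2 (P.elemF_degLT v) ha hne ha0 hv0
    funext i
    have := congrArg (fun x => P.coeff x (i : ℕ)) he0
    simp only [map_zero] at this
    rw [P.coeff_elemF, dif_pos i.isLt] at this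
    simpa using this
  have hβsurj := LinearMap.injective_iff_surjective.mp hβinj
  obtain ⟨v, hv⟩ := hβsurj (fun j => P.coeff y (j : ℕ))
  refine ⟨P.elemF v, P.elemF_degLT v, ?_⟩
  apply P.coeff.injective
  ext j
  by_cases h : j < m
  · have := congrFun hv ⟨j, h⟩
    exact this
  · rw [(hmodr _).1 j (by omega), hy j (by omega)]

lemma center_inv (hm : 2 ≤ m) (hf : P.MonicDeg f m) (hmodr : P.IsModr f m modr)
    (h2 : ¬ ∃ g h : R, P.degLT g m ∧ P.degLT h m ∧ f = g * h)
    {c : R} (hc : c ∈ P.petitCenter m modr) (hc0 : c ≠ 0) :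
    ∃ e ∈ P.petitCenter m modr, modr (e * c) = 1 ∧ modr (c * e) = 1 := by
  obtain ⟨hcd, hcc, hca⟩ := hc
  have h1d : P.degLT (1 : R) m := P.degLT_one (by omega)
  have mself : ∀ x : R, P.degLT x m → modr x = x := fun x hx => P.modr_self hσ hf hmodr hx
  have mdeg : ∀ x : R, P.degLT (modr x) m := fun x => (hmodr x).1
  obtain ⟨e, hed, hec⟩ := P.rmul_surj hσ hm hf hmodr h2 hcd hc0 h1d
  have hce : modr (c * e) = 1 := by rw [hcc e hed, hec]
  -- e commutes
  have comm_e : ∀ x : R, P.degLT x m → modr (e * x) = modr (x * e) := by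
    intro x hx
    refine P.rmul_inj hσ hm hf hmodr h2 hcd hc0 (mdeg _) (mdeg _) ?_
    have hL : modr (modr (e * x) * c) = x := by
      rw [(hca e x hed hx).2.2, ← hcc x hx, ← (hca e x hed hx).2.1, hec, one_mul, mself x hx]
    have hR : modr (modr (x * e) * c) = x := by
      rw [(hca x e hx hed).2.2, hec, mul_one, mself x hx]
    rw [hL, hR]
  -- associativity laws for e
  have A : ∀ x y : R, P.degLT x m → P.degLT y m →
      modr (modr (e * x) * y) = modr (e * modr (x * y)) := by
    intro x y hx hy
    refine P.lmul_inj hσ hm hf hmodr h2 hcd hc0 (mdeg _) (mdeg _) ?_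
    have hL : modr (c * modr (modr (e * x) * y)) = modr (x * y) := by
      rw [← (hca (modr (e * x)) y (mdeg _) hy).1, ← (hca e x hed hx).1, hce, one_mul,
        mself x hx]
    have hR : modr (c * modr (e * modr (x * y))) = modr (x * y) := by
      rw [← (hca e (modr (x * y)) hed (mdeg _)).1, hce, one_mul, mself _ (mdeg _)]
    rw [hL, hR]
  have C : ∀ x y : R, P.degLT x m → P.degLT y m →
      modr (modr (x * y) * e) = modr (x * modr (y * e)) := by
    intro x y hx hy
    refine P.rmul_inj hσ hm hf hmodr h2 hcd hc0 (mdeg _) (mdeg _) ?_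
    have hL : modr (modr (modr (x * y) * e) * c) = modr (x * y) := by
      rw [(hca (modr (x * y)) e (mdeg _) hed).2.2, hec, mul_one, mself _ (mdeg _)]
    have hR : modr (modr (x * modr (y * e)) * c) = modr (x * y) := by
      rw [(hca x (modr (y * e)) hx (mdeg _)).2.2, (hca y e hy hed).2.2, hec, mul_one,
        mself y hy]
    rw [hL, hR]
  have B : ∀ x y : R, P.degLT x m → P.degLT y m →
      modr (modr (x * e) * y) = modr (x * modr (e * y)) := by
    intro x y hx hy
    rw [← comm_e x hx, A x y hx hy, comm_e (modr (x * y)) (mdeg _), C x y hx hy,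
      comm_e y hy]
  exact ⟨e, ⟨hed, comm_e, fun x y hx hy => ⟨A x y hx hy, B x y hx hy, C x y hx hy⟩⟩,
    hec, hce⟩

end Center
end SkewPolyRing

namespace SkewPolyRing
section Center2
variable {S R : Type*} [DivisionRing S] [Ring R] {σ : S →+* S} {δ : S →+ S}
variable (P : SkewPolyRing S R σ δ) (hσ : Function.Injective σ)
variable {f : R} {m : ℕ} {modr : R → R}

lemma degLT_neg_s5 {g : R} (hg : P.degLT g m) : P.degLT (-g) m := by
  intro i hi
  rw [map_neg P.coeff, Finsupp.neg_apply, hg i hi, neg_zero]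

include hσ

lemma zero_mem_center (hf : P.MonicDeg f m) (hmodr : P.IsModr f m modr) :
    (0 : R) ∈ P.petitCenter m modr := by
  have mz := P.modr_zero hσ hf hmodr
  refine ⟨P.degLT_zero, fun x hx => by rw [zero_mul, mul_zero], fun x y hx hy => ?_⟩
  refine ⟨?_, ?_, ?_⟩
  · rw [zero_mul, mz, zero_mul, mz, zero_mul, mz]
  · rw [mul_zero, mz, zero_mul, mz, mul_zero, mz]
  · rw [mul_zero, mz, mul_zero, mz, mul_zero, mz]

lemma one_mem_center (hm : 2 ≤ m) (hf : P.MonicDeg f m) (hmodr : P.IsModr f m modr) :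
    (1 : R) ∈ P.petitCenter m modr := by
  have mself : ∀ x : R, P.degLT x m → modr x = x := fun x hx => P.modr_self hσ hf hmodr hx
  have mdeg : ∀ x : R, P.degLT (modr x) m := fun x => (hmodr x).1
  refine ⟨P.degLT_one (by omega), fun x hx => by rw [one_mul, mul_one], fun x y hx hy => ?_⟩
  refine ⟨?_, ?_, ?_⟩
  · rw [one_mul, one_mul, mself x hx, mself _ (mdeg (x * y))]
  · rw [mul_one, one_mul, mself x hx, mself y hy]
  · rw [mul_one, mul_one, mself _ (mdeg (x * y)), mself y hy]

lemma add_mem_center (hf : P.MonicDeg f m) (hmodr : P.IsModr f m modr)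
    {z w : R} (hz : z ∈ P.petitCenter m modr) (hw : w ∈ P.petitCenter m modr) :
    z + w ∈ P.petitCenter m modr := by
  obtain ⟨hzd, hzc, hza⟩ := hz
  obtain ⟨hwd, hwc, hwa⟩ := hw
  have ma := P.modr_add hσ hf hmodr
  refine ⟨P.degLT_add hzd hwd, fun x hx => ?_, fun x y hx hy => ?_⟩
  · rw [add_mul, mul_add, ma, ma, hzc x hx, hwc x hx]
  · refine ⟨?_, ?_, ?_⟩
    · rw [add_mul z w x, ma, add_mul, ma, add_mul z w (modr (x * y)), ma,
        (hza x y hx hy).1, (hwa x y hx hy).1]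
    · rw [mul_add x z w, ma, add_mul, ma, add_mul z w y, ma, mul_add x, ma,
        (hza x y hx hy).2.1, (hwa x y hx hy).2.1]
    · rw [mul_add (modr (x * y)) z w, ma, mul_add y z w, ma, mul_add x, ma,
        (hza x y hx hy).2.2, (hwa x y hx hy).2.2]

lemma neg_mem_center (hf : P.MonicDeg f m) (hmodr : P.IsModr f m modr)
    {z : R} (hz : z ∈ P.petitCenter m modr) :
    -z ∈ P.petitCenter m modr := by
  obtain ⟨hzd, hzc, hza⟩ := hz
  have ms : ∀ g h : R, modr (g - h) = modr g - modr h := P.modr_sub hσ hf hmodr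
  have mz := P.modr_zero hσ hf hmodr
  have mneg : ∀ g : R, modr (-g) = - modr g := by
    intro g
    have := ms 0 g
    rwa [zero_sub, mz, zero_sub] at this
  refine ⟨P.degLT_neg_s5 hzd, fun x hx => ?_, fun x y hx hy => ?_⟩
  · rw [neg_mul, mul_neg, mneg, mneg, hzc x hx]
  · refine ⟨?_, ?_, ?_⟩
    · rw [neg_mul z x, mneg, neg_mul, mneg, neg_mul z (modr (x * y)), mneg,
        (hza x y hx hy).1]
    · rw [mul_neg x z, mneg, neg_mul, mneg, neg_mul z y, mneg, mul_neg x, mneg,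
        (hza x y hx hy).2.1]
    · rw [mul_neg (modr (x * y)) z, mneg, mul_neg y z, mneg, mul_neg x, mneg,
        (hza x y hx hy).2.2]

lemma mul_mem_center (hf : P.MonicDeg f m) (hmodr : P.IsModr f m modr)
    {z w : R} (hz : z ∈ P.petitCenter m modr) (hw : w ∈ P.petitCenter m modr) :
    modr (z * w) ∈ P.petitCenter m modr := by
  obtain ⟨hzd, hzc, hza⟩ := hz
  obtain ⟨hwd, hwc, hwa⟩ := hw
  have mdeg : ∀ x : R, P.degLT (modr x) m := fun x => (hmodr x).1
  have comm : ∀ x, P.degLT x m → modr (modr (z * w) * x) = modr (x * modr (z * w)) := by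
    intro x hx
    rw [(hza w x hwd hx).1, hwc x hx, ← (hza x w hx hwd).1, hzc x hx, (hwa x z hx hzd).2.2]
  refine ⟨mdeg _, comm, fun x y hx hy => ?_⟩
  refine ⟨?_, ?_, ?_⟩
  · -- prop1
    rw [(hza w x hwd hx).1, (hza (modr (w * x)) y (mdeg _) hy).1, (hwa x y hx hy).1,
      ← (hza w (modr (x * y)) hwd (mdeg _)).1]
  · -- prop2
    rw [← comm x hx, (hza w x hwd hx).1, (hza (modr (w * x)) y (mdeg _) hy).1, hwc x hx,
      (hwa x y hx hy).2.1]
    -- now : modr (z * modr (x * modr (w * y))) = modr (x * modr (modr (z*w) * y))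
    rw [← (hza x (modr (w * y)) hx (mdeg _)).1, hzc x hx, (hza x (modr (w*y)) hx (mdeg _)).2.1,
      ← (hza w y hwd hy).1]
  · -- prop3
    rw [← (hwa (modr (x * y)) z (mdeg _) hzd).2.2, (hza x y hx hy).2.2,
      (hwa x (modr (y * z)) hx (mdeg _)).2.2, (hwa y z hy hzd).2.2]

end Center2
end SkewPolyRing

namespace SkewPolyRing
section LSurj
variable {S R : Type*} [DivisionRing S] [Ring R] {σ : S →+* S} {δ : S →+ S}
variable (P : SkewPolyRing S R σ δ) (hσ : Function.Injective σ)
variable {f : R} {m : ℕ} {modr : R → R}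

include P in
lemma one_ne_zero_R : (1 : R) ≠ 0 := by
  intro h
  have hc := P.coeff_one
  rw [h, map_zero] at hc
  have := Finsupp.single_eq_zero.mp hc.symm
  exact one_ne_zero this

include hσ

lemma lmul_surj (hm : 2 ≤ m) (hf : P.MonicDeg f m) (hmodr : P.IsModr f m modr)
    (h2 : ¬ ∃ g h : R, P.degLT g m ∧ P.degLT h m ∧ f = g * h)
    (hfd : ∃ (n : ℕ) (b : Fin n → R), (∀ i, P.degLT (b i) m) ∧
      ∀ x : R, P.degLT x m → ∃ c : Fin n → R,
        (∀ i, c i ∈ P.petitCenter m modr) ∧ x = ∑ i, modr (c i * b i))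
    {a : R} (ha : P.degLT a m) (ha0 : a ≠ 0) {y : R} (hy : P.degLT y m) :
    ∃ x, P.degLT x m ∧ modr (a * x) = y := by
  classical
  have mself : ∀ x : R, P.degLT x m → modr x = x := fun x hx => P.modr_self hσ hf hmodr hx
  have mdeg : ∀ x : R, P.degLT (modr x) m := fun x => (hmodr x).1
  have ma : ∀ g h : R, modr (g + h) = modr g + modr h := P.modr_add hσ hf hmodr
  have mz : modr 0 = 0 := P.modr_zero hσ hf hmodr
  let ZS : AddSubgroup R :=
  { carrier := P.petitCenter m modr
    add_mem' := fun hz hw => P.add_mem_center hσ hf hmodr hz hw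
    zero_mem' := P.zero_mem_center hσ hf hmodr
    neg_mem' := fun hz => P.neg_mem_center hσ hf hmodr hz }
  let VS : AddSubgroup R :=
  { carrier := {x | P.degLT x m}
    add_mem' := fun hz hw => P.degLT_add hz hw
    zero_mem' := P.degLT_zero
    neg_mem' := fun hz => P.degLT_neg_s5 hz }
  have memZ : ∀ z : ↥ZS, z.1 ∈ P.petitCenter m modr := fun z => z.2
  have memV : ∀ x : ↥VS, P.degLT x.1 m := fun x => x.2
  letI crZ : CommRing ↥ZS :=
  { (inferInstance : AddCommGroup ↥ZS) with
    mul := fun z w => ⟨modr (z.1 * w.1), P.mul_mem_center hσ hf hmodr (memZ z) (memZ w)⟩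
    one := ⟨1, P.one_mem_center hσ hm hf hmodr⟩
    mul_assoc := fun z w v => Subtype.ext
      (((memZ z).2.2 w.1 v.1 (memZ w).1 (memZ v).1).1)
    one_mul := fun z => Subtype.ext (by
      show modr (1 * z.1) = z.1
      rw [one_mul, mself z.1 (memZ z).1])
    mul_one := fun z => Subtype.ext (by
      show modr (z.1 * 1) = z.1
      rw [mul_one, mself z.1 (memZ z).1])
    left_distrib := fun z w v => Subtype.ext (by
      show modr (z.1 * (w.1 + v.1)) = modr (z.1 * w.1) + modr (z.1 * v.1)
      rw [mul_add, ma])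
    right_distrib := fun z w v => Subtype.ext (by
      show modr ((z.1 + w.1) * v.1) = modr (z.1 * v.1) + modr (w.1 * v.1)
      rw [add_mul, ma])
    zero_mul := fun z => Subtype.ext (by
      show modr (0 * z.1) = 0
      rw [zero_mul, mz])
    mul_zero := fun z => Subtype.ext (by
      show modr (z.1 * 0) = 0
      rw [mul_zero, mz])
    mul_comm := fun z w => Subtype.ext ((memZ z).2.1 w.1 (memZ w).1) }
  have ntZ : (1 : ↥ZS) ≠ 0 := by
    intro h
    exact one_ne_zero_R P (congrArg Subtype.val h)
  have hIsField : IsField ↥ZS :=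
  { exists_pair_ne := ⟨1, 0, ntZ⟩
    mul_comm := mul_comm
    mul_inv_cancel := by
      rintro ⟨z, hz⟩ hz0
      have hz1 : z ≠ 0 := by
        intro h
        exact hz0 (Subtype.ext h)
      obtain ⟨e, heZ, hec, hce⟩ := P.center_inv hσ hm hf hmodr h2 hz hz1
      exact ⟨⟨e, heZ⟩, Subtype.ext hce⟩ }
  letI fld : Field ↥ZS := hIsField.toField
  letI modZ : Module ↥ZS ↥VS :=
  { smul := fun z x => ⟨modr (z.1 * x.1), mdeg _⟩
    one_smul := fun x => Subtype.ext (by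
      show modr (1 * x.1) = x.1
      rw [one_mul, mself x.1 (memV x)])
    mul_smul := fun z w x => Subtype.ext
      (((memZ z).2.2 w.1 x.1 (memZ w).1 (memV x)).1)
    smul_zero := fun z => Subtype.ext (by
      show modr (z.1 * 0) = 0
      rw [mul_zero, mz])
    smul_add := fun z x y => Subtype.ext (by
      show modr (z.1 * (x.1 + y.1)) = modr (z.1 * x.1) + modr (z.1 * y.1)
      rw [mul_add, ma])
    add_smul := fun z w x => Subtype.ext (by
      show modr ((z.1 + w.1) * x.1) = modr (z.1 * x.1) + modr (w.1 * x.1)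
      rw [add_mul, ma])
    zero_smul := fun x => Subtype.ext (by
      show modr (0 * x.1) = 0
      rw [zero_mul, mz]) }
  haveI hfin : Module.Finite ↥ZS ↥VS := by
    obtain ⟨n, bb, hbb, hspan⟩ := hfd
    refine ⟨⟨Finset.univ.image (fun i => (⟨bb i, hbb i⟩ : ↥VS)), ?_⟩⟩
    rw [Submodule.eq_top_iff']
    intro x
    obtain ⟨cv, hcZ, hxs⟩ := hspan x.1 (memV x)
    have hx : x = ∑ i, (⟨cv i, hcZ i⟩ : ↥ZS) • (⟨bb i, hbb i⟩ : ↥VS) := by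
      apply Subtype.ext
      rw [hxs, AddSubmonoidClass.coe_finset_sum]
      rfl
    rw [hx]
    refine Submodule.sum_mem _ fun i _ => Submodule.smul_mem _ _ (Submodule.subset_span ?_)
    simp only [Finset.coe_image, Finset.coe_univ, Set.image_univ, Set.mem_range]
    exact ⟨i, rfl⟩
  let L : ↥VS →ₗ[↥ZS] ↥VS :=
  { toFun := fun x => ⟨modr (a * x.1), mdeg _⟩
    map_add' := fun x y => Subtype.ext (by
      show modr (a * (x.1 + y.1)) = modr (a * x.1) + modr (a * y.1)
      rw [mul_add, ma])
    map_smul' := fun z x => Subtype.ext (by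
      show modr (a * modr (z.1 * x.1)) = modr (z.1 * modr (a * x.1))
      rw [(memZ z).2.1 x.1 (memV x), ← ((memZ z).2.2 a x.1 ha (memV x)).2.2,
        (memZ z).2.1 (modr (a * x.1)) (mdeg _)]) }
  have hLinj : Function.Injective L := by
    rw [← LinearMap.ker_eq_bot, LinearMap.ker_eq_bot']
    intro x hx0
    have hval : modr (a * x.1) = 0 := congrArg Subtype.val hx0
    apply Subtype.ext
    show x.1 = 0
    by_contra hne
    exact P.nzd hσ hm hf hmodr h2 ha (memV x) ha0 hne hval
  have hLsurj := LinearMap.injective_iff_surjective.mp hLinj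
  obtain ⟨x, hx⟩ := hLsurj ⟨y, hy⟩
  exact ⟨x.1, memV x, congrArg Subtype.val hx⟩

end LSurj
end SkewPolyRing

/-- Let `S` be a division ring and `f ∈ S[t;σ,δ]` monic of degree `m ≥ 2` such that the
Petit algebra `S_f` is a finite-dimensional vector space over its center `S₀`.  Then `S_f`
is a division algebra (all left and right multiplications by nonzero elements are bijective)
if and only if `f` is irreducible in `S[t;σ,δ]`. -/
theorem petit_division_iff_irreducible {S R : Type*} [DivisionRing S] [Ring R]
    (σ : S →+* S) (δ : S →+ S) (hσ : Function.Injective σ)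
    (hδ : ∀ a b : S, δ (a * b) = σ a * δ b + δ a * b)
    (P : SkewPolyRing S R σ δ) (f : R) (m : ℕ) (hm : 2 ≤ m)
    (hf : P.MonicDeg f m) (modr : R → R) (hmodr : P.IsModr f m modr)
    -- `S_f` is finite-dimensional over its center `S₀`:
    (hfd : ∃ (n : ℕ) (b : Fin n → R), (∀ i, P.degLT (b i) m) ∧
      ∀ x : R, P.degLT x m → ∃ c : Fin n → R,
        (∀ i, c i ∈ P.petitCenter m modr) ∧ x = ∑ i, modr (c i * b i)) :
    -- `S_f` is a division algebra ...
    (∀ a : R, P.degLT a m → a ≠ 0 → ∀ b : R, P.degLT b m →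
        (∃! x : R, P.degLT x m ∧ modr (a * x) = b) ∧
        (∃! x : R, P.degLT x m ∧ modr (x * a) = b)) ↔
    -- ... if and only if `f` is irreducible in `S[t;σ,δ]`.
    (¬ IsUnit f ∧ ¬ ∃ g h : R, P.degLT g m ∧ P.degLT h m ∧ f = g * h) := by
  open SkewPolyRing in
  constructor
  · intro Hdiv
    constructor
    · intro hu
      obtain ⟨u, hu⟩ := hu
      have h1 : (↑u⁻¹ : R) * f = 1 := by rw [← hu]; exact u.inv_mul
      have hdeg : P.degLT ((↑u⁻¹ : R) * f) m := by
        rw [h1]; exact P.degLT_one (by omega)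
      have h0 : (↑u⁻¹ : R) = 0 := P.eq_zero_of_mulf_degLT hσ hf hdeg
      rw [h0, zero_mul] at h1
      exact SkewPolyRing.one_ne_zero_R P h1.symm
    · rintro ⟨g, h, hg, hh, hfgh⟩
      have hfne : f ≠ 0 := P.f_ne_zero hσ hf
      have hg0 : g ≠ 0 := by rintro rfl; rw [zero_mul] at hfgh; exact hfne hfgh
      have hh0 : h ≠ 0 := by rintro rfl; rw [mul_zero] at hfgh; exact hfne hfgh
      have hmod0 : modr (g * h) = 0 := by
        rw [← hfgh]
        exact P.modr_unique hσ hf hmodr (q := 1) (by rw [one_mul, add_zero]) P.degLT_zero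
      obtain ⟨x0, hx0p, huniq⟩ := (Hdiv g hg hg0 0 P.degLT_zero).1
      have e1 : h = x0 := huniq h ⟨hh, hmod0⟩
      have e2 : (0 : R) = x0 := huniq 0
        ⟨P.degLT_zero, by rw [mul_zero]; exact P.modr_zero hσ hf hmodr⟩
      exact hh0 (e1.trans e2.symm)
  · rintro ⟨h1, h2⟩ a ha ha0 b hb
    constructor
    · obtain ⟨x, hx, hxe⟩ := P.lmul_surj hσ hm hf hmodr h2 hfd ha ha0 hb
      refine ⟨x, ⟨hx, hxe⟩, ?_⟩
      rintro x' ⟨hx', hxe'⟩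
      exact P.lmul_inj hσ hm hf hmodr h2 ha ha0 hx' hx (by rw [hxe', hxe])
    · obtain ⟨x, hx, hxe⟩ := P.rmul_surj hσ hm hf hmodr h2 ha ha0 hb
      refine ⟨x, ⟨hx, hxe⟩, ?_⟩
      rintro x' ⟨hx', hxe'⟩
      exact P.rmul_inj hσ hm hf hmodr h2 ha ha0 hx' hx (by rw [hxe', hxe])
end

section
/- Let Λ be the natural order of a nonassociative cyclic division algebra A = (K/F,σ,d) of degree m over a number field F, with d ∈ O_K^×. Then every nonzero two-sided ideal J of Λ satisfies J ∩ O_K ≠ 0. -/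
namespace SkewPolyRing

variable {S R : Type*} [Ring S] [Ring R] {σ : S →+* S}

theorem symm_single (P : SkewPolyRing S R σ 0) (i : ℕ) (a : S) :
    P.coeff.symm (Finsupp.single i a) = P.ι a * P.t ^ i := by
  rw [P.coeff_symm, Finsupp.sum_single_index]
  simp

theorem coeff_ι (P : SkewPolyRing S R σ 0) (a : S) :
    P.coeff (P.ι a) = Finsupp.single 0 a := by
  have := P.symm_single 0 a
  simp only [pow_zero, mul_one] at this
  rw [← this, AddEquiv.apply_symm_apply]

theorem tpow_ι (P : SkewPolyRing S R σ 0) (k : ℕ) (a : S) :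
    P.t ^ k * P.ι a = P.ι ((⇑σ)^[k] a) * P.t ^ k := by
  induction k with
  | zero => simp
  | succ k ih =>
    rw [pow_succ', mul_assoc, ih, ← mul_assoc, P.t_comm]
    simp only [AddMonoidHom.zero_apply, map_zero, add_zero]
    rw [Function.iterate_succ_apply', mul_assoc, ← pow_succ']

theorem symm_mul_tpow (P : SkewPolyRing S R σ 0) (k : ℕ) (p : ℕ →₀ S) :
    P.coeff.symm p * P.t ^ k =
      P.coeff.symm (Finsupp.embDomain ⟨(· + k), add_left_injective k⟩ p) := by
  induction p using Finsupp.induction with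
  | zero => simp
  | single_add j b q hj hb ih =>
    rw [map_add, add_mul, ih, Finsupp.embDomain_add, map_add, Finsupp.embDomain_single,
      P.symm_single, mul_assoc, ← pow_add, ← P.symm_single]
    rfl

theorem coeff_mul_tpow (P : SkewPolyRing S R σ 0) (k : ℕ) (g : R) (i : ℕ) :
    P.coeff (g * P.t ^ k) (i + k) = P.coeff g i := by
  conv_lhs => rw [show g = P.coeff.symm (P.coeff g) from (P.coeff.symm_apply_apply g).symm]
  rw [P.symm_mul_tpow, AddEquiv.apply_symm_apply]
  exact Finsupp.embDomain_apply_self ⟨(· + k), add_left_injective k⟩ (P.coeff g) i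

theorem coeff_symm_mul_ι (P : SkewPolyRing S R σ 0) (a : S) (p : ℕ →₀ S) (i : ℕ) :
    P.coeff (P.coeff.symm p * P.ι a) i = p i * (⇑σ)^[i] a := by
  induction p using Finsupp.induction with
  | zero => simp
  | single_add j b q hj hb ih =>
    rw [map_add, add_mul, map_add, Finsupp.add_apply, ih, Finsupp.add_apply, add_mul]
    congr 1
    rw [P.symm_single, mul_assoc, P.tpow_ι, ← mul_assoc, ← map_mul, ← P.symm_single,
      AddEquiv.apply_symm_apply]
    rcases eq_or_ne i j with rfl | h
    · simp
    · rw [Finsupp.single_eq_of_ne h, Finsupp.single_eq_of_ne h, zero_mul]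

theorem coeff_mul_ι (P : SkewPolyRing S R σ 0) (a : S) (g : R) (i : ℕ) :
    P.coeff (g * P.ι a) i = P.coeff g i * (⇑σ)^[i] a := by
  conv_lhs => rw [show g = P.coeff.symm (P.coeff g) from (P.coeff.symm_apply_apply g).symm]
  exact P.coeff_symm_mul_ι a (P.coeff g) i

theorem coeff_symm_ι_mul (P : SkewPolyRing S R σ 0) (b : S) (p : ℕ →₀ S) (i : ℕ) :
    P.coeff (P.ι b * P.coeff.symm p) i = b * p i := by
  induction p using Finsupp.induction with
  | zero => simp
  | single_add j c q hj hb ih =>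
    rw [map_add, mul_add, map_add, Finsupp.add_apply, ih, Finsupp.add_apply, mul_add]
    congr 1
    rw [P.symm_single, ← mul_assoc, ← map_mul, ← P.symm_single, AddEquiv.apply_symm_apply]
    rcases eq_or_ne i j with rfl | h
    · simp
    · rw [Finsupp.single_eq_of_ne h, Finsupp.single_eq_of_ne h, mul_zero]

theorem coeff_ι_mul (P : SkewPolyRing S R σ 0) (b : S) (g : R) (i : ℕ) :
    P.coeff (P.ι b * g) i = b * P.coeff g i := by
  conv_lhs => rw [show g = P.coeff.symm (P.coeff g) from (P.coeff.symm_apply_apply g).symm]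
  exact P.coeff_symm_ι_mul b (P.coeff g) i

end SkewPolyRing

open NumberField Finsupp

set_option synthInstance.maxHeartbeats 1000000 in
set_option maxHeartbeats 1000000 in
/-- Let `Λ` be the natural order of a nonassociative cyclic division algebra
`A = (K/F,σ,d)` of degree `m` over a number field `F`, with `d ∈ O_K^×` and
`f = t^m − d` irreducible in `K[t;σ]`.  Then every nonzero two-sided ideal `J` of `Λ`
satisfies `J ∩ O_K ≠ 0`. -/
theorem ideal_meets_ring_of_integers {F K R RK : Type*} [Field F] [Field K]
    [NumberField F] [NumberField K] [Algebra F K] [IsGalois F K] [Ring R] [Ring RK]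
    (m : ℕ) (hm : 2 ≤ m) (hdeg : Module.finrank F K = m)
    (σ : K ≃ₐ[F] K) (hgen : ∀ τ : K ≃ₐ[F] K, τ ∈ Subgroup.zpowers σ)
    (σ₀ : 𝓞 K →+* 𝓞 K) (hσ₀ : ∀ x : 𝓞 K, (σ₀ x : K) = σ (x : K))
    (d : 𝓞 K) (hd : IsUnit d)
    -- `f = t^m − d` is irreducible in `K[t;σ]`, so `A` is a division algebra:
    (σK : K →+* K) (hσK : ∀ x : K, σK x = σ x)
    (PK : SkewPolyRing K RK σK 0)
    (hirr : ¬ ∃ g h : RK, PK.degLT g m ∧ PK.degLT h m ∧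
      PK.coeff.symm (Finsupp.single m 1 - Finsupp.single 0 (d : K)) = g * h)
    -- the natural order `Λ`: the Petit algebra of `f = t^m − d` inside `R = O_K[t;σ]`:
    (P : SkewPolyRing (𝓞 K) R σ₀ 0) (f : R)
    (hf : f = P.coeff.symm (Finsupp.single m 1 - Finsupp.single 0 d))
    (modr : R → R) (hmodr : P.IsModr f m modr)
    -- `J` a nonzero two-sided ideal of `Λ`:
    (J : AddSubgroup R) (hJΛ : ∀ x ∈ J, P.degLT x m)
    (hJl : ∀ x ∈ J, ∀ l : R, P.degLT l m → modr (l * x) ∈ J)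
    (hJr : ∀ x ∈ J, ∀ l : R, P.degLT l m → modr (x * l) ∈ J)
    (hJne : ∃ x ∈ J, x ≠ 0) :
    ∃ a : 𝓞 K, a ≠ 0 ∧ P.ι a ∈ J := by
  classical
  haveI : FiniteDimensional F K := FiniteDimensional.of_finrank_pos (by omega)
  -- injectivity of σ₀
  have hσ₀inj : Function.Injective σ₀ := by
    intro x y h
    apply RingOfIntegers.coe_injective (K := K)
    simp only [← RingOfIntegers.coe_eq_algebraMap]
    apply σ.injective
    rw [← hσ₀, ← hσ₀, h]
  -- iterates of σ₀ correspond to powers of σ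
  have hσiter : ∀ (k : ℕ) (x : 𝓞 K), (((⇑σ₀)^[k] x : 𝓞 K) : K) = (σ ^ k) (x : K) := by
    intro k
    induction k with
    | zero => intro x; simp
    | succ k ih =>
      intro x
      rw [Function.iterate_succ_apply, ih, pow_succ, AlgEquiv.mul_apply, hσ₀]
  -- no small iterate of σ₀ is the identity
  have hord : ∀ k : ℕ, 0 < k → k < m → ∃ x : 𝓞 K, (⇑σ₀)^[k] x ≠ x := by
    intro k hk0 hkm
    by_contra h
    push_neg at h
    have h1 : σ ^ k = 1 := by
      ext z
      obtain ⟨x, y, hy, hz⟩ := IsFractionRing.div_surjective (A := 𝓞 K) z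
      rw [← hz, map_div₀]
      rw [← RingOfIntegers.coe_eq_algebraMap, ← RingOfIntegers.coe_eq_algebraMap,
        ← hσiter, ← hσiter, h x, h y, AlgEquiv.one_apply]
    have hcard : orderOf σ = m := by
      rw [orderOf_eq_card_of_forall_mem_zpowers hgen,
        IsGalois.card_aut_eq_finrank, hdeg]
    have := Nat.le_of_dvd hk0 (hcard ▸ orderOf_dvd_of_pow_eq_one h1)
    omega
  -- zero / nonzero via coeff
  have hcz : ∀ g : R, P.coeff g = 0 → g = 0 := by
    intro g h
    apply P.coeff.injective
    rw [h, map_zero]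
  -- key lemma : q * f cannot have degree < m unless q = 0
  have hfexp : f = P.t ^ m - P.ι d := by
    rw [hf, map_sub, P.symm_single, P.symm_single, map_one, one_mul, pow_zero, mul_one]
  have key : ∀ q : R, P.degLT (q * f) m → q = 0 := by
    intro q hq
    by_contra hq0
    have hpne : (P.coeff q) ≠ 0 := fun h => hq0 (hcz q h)
    obtain ⟨N, hN, hNs⟩ :=
      Finset.exists_mem_eq_sup (P.coeff q).support (Finsupp.support_nonempty_iff.mpr hpne) id
    have hNtop : P.coeff q (N + m) = 0 := by
      by_contra h
      have : N + m ∈ (P.coeff q).support := Finsupp.mem_support_iff.mpr h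
      have h2 := Finset.le_sup (f := id) this
      rw [hNs] at h2
      simp only [id_eq] at h2
      omega
    have h1 : P.coeff (q * f) (N + m) = P.coeff q N := by
      rw [hfexp, mul_sub, map_sub, Finsupp.sub_apply, P.coeff_mul_tpow, P.coeff_mul_ι,
        hNtop, zero_mul, sub_zero]
    have := hq (N + m) (Nat.le_add_left m N)
    rw [h1] at this
    exact Finsupp.mem_support_iff.mp hN this
  -- modr fixes elements of degree < m
  have hmodr_eq : ∀ g : R, P.degLT g m → modr g = g := by
    intro g hg
    obtain ⟨hlt, q, hq⟩ := hmodr g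
    have hqf : q * f = g - modr g := eq_sub_of_add_eq hq.symm
    have : P.degLT (q * f) m := by
      intro i hi
      rw [hqf, map_sub, Finsupp.sub_apply, hg i hi, hlt i hi, sub_zero]
    rw [key q this, zero_mul, zero_add] at hq
    exact hq.symm
  -- degree facts
  have hdegmem : ∀ g : R, g ≠ 0 → P.coeff g (P.deg g) ≠ 0 := by
    intro g hg
    have hne : (P.coeff g).support.Nonempty :=
      Finsupp.support_nonempty_iff.mpr (fun h => hg (hcz g h))
    obtain ⟨b, hb, hbs⟩ := Finset.exists_mem_eq_sup _ hne id
    have : P.deg g = b := hbs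
    rw [this]
    exact Finsupp.mem_support_iff.mp hb
  have hdegtop : ∀ (g : R) (i : ℕ), P.deg g < i → P.coeff g i = 0 := by
    intro g i hi
    by_contra h
    have := Finset.le_sup (f := id) (Finsupp.mem_support_iff.mpr h)
    have : i ≤ P.deg g := this
    omega
  have hιLT : ∀ a : 𝓞 K, P.degLT (P.ι a) m := by
    intro a j hj
    rw [P.coeff_ι, Finsupp.single_eq_of_ne (by omega)]
  -- minimal-degree element of J
  have hex : ∃ k : ℕ, ∃ x ∈ J, x ≠ 0 ∧ P.deg x = k := by
    obtain ⟨x0, h1, h2⟩ := hJne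
    exact ⟨P.deg x0, x0, h1, h2, rfl⟩
  obtain ⟨n, hn⟩ : ∃ n : ℕ, n = Nat.find hex := ⟨_, rfl⟩
  obtain ⟨x, hxJ, hxne, hxdeg⟩ := Nat.find_spec hex
  rw [← hn] at hxdeg
  have hmin : ∀ y ∈ J, y ≠ 0 → n ≤ P.deg y := by
    intro y hy hy0
    exact hn ▸ Nat.find_min' hex ⟨y, hy, hy0, rfl⟩
  obtain ⟨c, hc⟩ : ∃ c : 𝓞 K, c = P.coeff x n := ⟨_, rfl⟩
  have hcne : c ≠ 0 := by rw [hc, ← hxdeg]; exact hdegmem x hxne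
  have hnm : n < m := by
    by_contra h
    apply hcne
    rw [hc]
    exact hJΛ x hxJ n (by omega)
  -- all lower coefficients of x vanish
  have hlow : ∀ i, i < n → P.coeff x i = 0 := by
    intro i hi
    by_contra hci
    obtain ⟨a, ha⟩ := hord (n - i) (by omega) (by omega)
    set y := x * P.ι a - P.ι ((⇑σ₀)^[n] a) * x with hy
    have hyJ : y ∈ J := by
      have h1 := hJr x hxJ (P.ι a) (hιLT a)
      have h2 := hJl x hxJ (P.ι ((⇑σ₀)^[n] a)) (hιLT _)
      rw [hmodr_eq _ (fun j hj => by rw [P.coeff_mul_ι, hJΛ x hxJ j hj, zero_mul])] at h1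
      rw [hmodr_eq _ (fun j hj => by rw [P.coeff_ι_mul, hJΛ x hxJ j hj, mul_zero])] at h2
      exact J.sub_mem h1 h2
    have hycoeff : ∀ j, P.coeff y j =
        P.coeff x j * (⇑σ₀)^[j] a - (⇑σ₀)^[n] a * P.coeff x j := by
      intro j
      rw [hy, map_sub, Finsupp.sub_apply, P.coeff_mul_ι, P.coeff_ι_mul]
    have hyn : ∀ j, n ≤ j → P.coeff y j = 0 := by
      intro j hj
      rcases eq_or_lt_of_le hj with rfl | hj'
      · rw [hycoeff, mul_comm, sub_self]
      · rw [hycoeff, hdegtop x j (hxdeg ▸ hj'), zero_mul, mul_zero, sub_zero]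
    have hy0 : y = 0 := by
      by_contra h
      exact hdegmem y h (hyn (P.deg y) (hmin y hyJ h))
    have h0 : P.coeff x i * (⇑σ₀)^[i] a - (⇑σ₀)^[n] a * P.coeff x i = 0 := by
      rw [← hycoeff, hy0, map_zero, Finsupp.zero_apply]
    rw [sub_eq_zero, mul_comm] at h0
    have heq : (⇑σ₀)^[i] a = (⇑σ₀)^[n] a := mul_right_cancel₀ hci h0
    apply ha
    apply Function.Injective.iterate hσ₀inj i
    rw [← Function.iterate_add_apply, Nat.add_sub_cancel' (le_of_lt hi)]
    exact heq.symm
  -- hence x = ι c * t^n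
  have hxeq : x = P.ι c * P.t ^ n := by
    rw [← P.symm_single]
    apply P.coeff.injective
    rw [AddEquiv.apply_symm_apply]
    ext j
    rcases lt_trichotomy j n with h | rfl | h
    · rw [hlow j h, Finsupp.single_eq_of_ne (by omega)]
    · rw [Finsupp.single_eq_same]
      exact congrArg _ hc.symm
    · rw [hdegtop x j (hxdeg ▸ h), Finsupp.single_eq_of_ne (by omega)]
  rcases Nat.eq_zero_or_pos n with hn0 | hn1
  · rw [hn0, pow_zero, mul_one] at hxeq
    exact ⟨c, hcne, hxeq ▸ hxJ⟩
  -- n ≥ 1 : multiply by t^(m-n) and reduce mod f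
  · set l := P.ι 1 * P.t ^ (m - n) with hl
    have hlsym : l = P.coeff.symm (Finsupp.single (m - n) 1) := (P.symm_single _ _).symm
    have hlLT : P.degLT l m := by
      intro j hj
      rw [hlsym, AddEquiv.apply_symm_apply, Finsupp.single_eq_of_ne (by omega)]
    have hxl : x * l = P.ι c * f + P.ι (c * d) := by
      rw [hxeq, hl, map_one, one_mul, mul_assoc, ← pow_add,
        Nat.add_sub_cancel' (le_of_lt hnm), hfexp, mul_sub, map_mul]
      abel
    have hmem := hJr x hxJ l hlLT
    obtain ⟨hrlt, q, hq⟩ := hmodr (x * l)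
    have h2 : q * f + modr (x * l) = P.ι c * f + P.ι (c * d) := hq.symm.trans hxl
    have h3 : (q - P.ι c) * f = P.ι (c * d) - modr (x * l) := by
      rw [sub_mul]
      have : q * f = P.ι c * f + P.ι (c * d) - modr (x * l) := by rw [← h2]; abel
      rw [this]; abel
    have h4 : P.degLT ((q - P.ι c) * f) m := by
      intro j hj
      rw [h3, map_sub, Finsupp.sub_apply, hιLT _ j hj, hrlt j hj, sub_zero]
    have h5 := key _ h4
    rw [h5, zero_mul, eq_comm, sub_eq_zero] at h3
    refine ⟨c * d, mul_ne_zero hcne ?_, by rwa [h3]⟩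
    exact hd.ne_zero
end
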